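/- Let α ∈ (0,1), let w = (w_1,w_2,w_3) be a vector of strictly positive weights, and define d_α(U,V) = α·(1 − Corr(U,V)) + (1−α)·d_weu(U,V) for U, V ∈ ℝ³. Then there exists a > 0 such that, with X = (a,0,0), Y = (a,a,0), Z = (0,a,0), the triangle inequality fails: d_α(X,Z) > d_α(X,Y) + d_α(Y,Z). -/

import Mathlib

open scoped BigOperators

/-- Sample Pearson correlation, defined to be 0 when a denominator vanishes. -/
noncomputable def corr {m : ℕ} (U V : Fin m → ℝ) : ℝ :=
  let Ubar := (∑ i, U i) / m
  let Vbar := (∑ i, V i) / m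
  let den := Real.sqrt (∑ i, (U i - Ubar) ^ 2) * Real.sqrt (∑ i, (V i - Vbar) ^ 2)
  if den = 0 then 0 else (∑ i, (U i - Ubar) * (V i - Vbar)) / den

/-- Weighted Euclidean distance with weight vector `w`. -/
noncomputable def dweu {m : ℕ} (w U V : Fin m → ℝ) : ℝ :=
  Real.sqrt (∑ i, w i * (U i - V i) ^ 2)

/-- The interpolated base dissimilarity `d_α`. -/
noncomputable def dAlpha {m : ℕ} (w : Fin m → ℝ) (α : ℝ) (U V : Fin m → ℝ) : ℝ :=
  α * (1 - corr U V) + (1 - α) * dweu w U V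

lemma corr_XZ (a : ℝ) (ha : 0 < a) : corr ![a,0,0] ![0,a,0] = -(1/2) := by
  unfold corr
  simp only [Fin.sum_univ_three, Matrix.cons_val_zero, Matrix.cons_val_one, Matrix.head_cons,
    Matrix.cons_val_two, Matrix.tail_cons, Nat.cast_ofNat]
  norm_num
  have h1 : (a - a/3)^2 + (a/3)^2 + (a/3)^2 = 2*a^2/3 := by ring
  have h2 : (a/3)^2 + (a - a/3)^2 + (a/3)^2 = 2*a^2/3 := by ring
  rw [h1, h2, Real.mul_self_sqrt (by positivity)]
  rw [if_neg]
  · field_simp; ring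
  · push_neg
    constructor <;> · intro h; rw [Real.sqrt_eq_zero (by positivity)] at h; nlinarith

lemma corr_XY (a : ℝ) (ha : 0 < a) : corr ![a,0,0] ![a,a,0] = 1/2 := by
  unfold corr
  simp only [Fin.sum_univ_three, Matrix.cons_val_zero, Matrix.cons_val_one, Matrix.head_cons,
    Matrix.cons_val_two, Matrix.tail_cons, Nat.cast_ofNat]
  norm_num
  have h1 : (a - a/3)^2 + (a/3)^2 + (a/3)^2 = 2*a^2/3 := by ring
  have h2 : (a - (a+a)/3)^2 + (a - (a+a)/3)^2 + ((a+a)/3)^2 = 2*a^2/3 := by ring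
  rw [h1, h2, Real.mul_self_sqrt (by positivity)]
  rw [if_neg]
  · field_simp; ring
  · push_neg
    constructor <;> · intro h; rw [Real.sqrt_eq_zero (by positivity)] at h; nlinarith

lemma corr_YZ (a : ℝ) (ha : 0 < a) : corr ![a,a,0] ![0,a,0] = 1/2 := by
  unfold corr
  simp only [Fin.sum_univ_three, Matrix.cons_val_zero, Matrix.cons_val_one, Matrix.head_cons,
    Matrix.cons_val_two, Matrix.tail_cons, Nat.cast_ofNat]
  norm_num
  have h1 : (a - (a+a)/3)^2 + (a - (a+a)/3)^2 + ((a+a)/3)^2 = 2*a^2/3 := by ring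
  have h2 : (a/3)^2 + (a - a/3)^2 + (a/3)^2 = 2*a^2/3 := by ring
  rw [h1, h2, Real.mul_self_sqrt (by positivity)]
  rw [if_neg]
  · field_simp; ring
  · push_neg
    constructor <;> · intro h; rw [Real.sqrt_eq_zero (by positivity)] at h; nlinarith

/-- for any `α ∈ (0,1)` and strictly positive weights, there is `a > 0`
for which `d_α` violates the triangle inequality on `X = (a,0,0)`, `Y = (a,a,0)`,
`Z = (0,a,0)`. -/
theorem dAlpha_triangle_fails (α : ℝ) (hα0 : 0 < α) (hα1 : α < 1)
    (w : Fin 3 → ℝ) (hw : ∀ i, 0 < w i) :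
    ∃ a : ℝ, 0 < a ∧
      dAlpha w α ![a, 0, 0] ![0, a, 0] >
        dAlpha w α ![a, 0, 0] ![a, a, 0] + dAlpha w α ![a, a, 0] ![0, a, 0] := by
  have h1α : 0 < 1 - α := by linarith
  set c : ℝ := Real.sqrt (w 0) + Real.sqrt (w 1) with hc
  have hc0 : 0 ≤ c := by positivity
  set a : ℝ := α / (2 * (1 - α) * (c + 1)) with ha
  have hapos : 0 < a := by positivity
  refine ⟨a, hapos, ?_⟩
  unfold dAlpha
  rw [corr_XZ a hapos, corr_XY a hapos, corr_YZ a hapos]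
  have hXY : dweu w ![a,0,0] ![a,a,0] = a * Real.sqrt (w 1) := by
    unfold dweu
    simp only [Fin.sum_univ_three, Matrix.cons_val_zero, Matrix.cons_val_one, Matrix.head_cons,
      Matrix.cons_val_two, Matrix.tail_cons]
    rw [show w 0 * (a - a)^2 + w 1 * (0 - a)^2 + w 2 * ((0:ℝ) - 0)^2 = a^2 * w 1 by ring,
      Real.sqrt_mul (by positivity), Real.sqrt_sq hapos.le]
  have hYZ : dweu w ![a,a,0] ![0,a,0] = a * Real.sqrt (w 0) := by
    unfold dweu
    simp only [Fin.sum_univ_three, Matrix.cons_val_zero, Matrix.cons_val_one, Matrix.head_cons,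
      Matrix.cons_val_two, Matrix.tail_cons]
    rw [show w 0 * (a - 0)^2 + w 1 * (a - a)^2 + w 2 * ((0:ℝ) - 0)^2 = a^2 * w 0 by ring,
      Real.sqrt_mul (by positivity), Real.sqrt_sq hapos.le]
  rw [hXY, hYZ]
  have hXZ : 0 ≤ dweu w ![a,0,0] ![0,a,0] := Real.sqrt_nonneg _
  have hkey : (1 - α) * (a * Real.sqrt (w 1) + a * Real.sqrt (w 0)) < α / 2 := by
    have : (1 - α) * a * c = α * c / (2 * (c + 1)) := by
      rw [ha]; field_simp
    have hlt : α * c / (2 * (c + 1)) < α / 2 := by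
      rw [div_lt_div_iff₀ (by positivity) (by positivity)]
      nlinarith
    nlinarith [this]
  nlinarith [hkey, mul_nonneg h1α.le hXZ]
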